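/- Let $p$ be a prime, let $g$ be an integer with $\gcd(g,p)=1$, and let $n$ be the multiplicative order of $g$ modulo $p$. If $n \equiv 3 \pmod 4$, then $Q(g,p)^2 \equiv -n \pmod p$, where $Q(g,p) = \sum_{k=1}^{n} g^{k^2} \pmod p$. -/

import Mathlib

open Finset

/-- Change exponents modulo the order. -/
private lemma pow_congr_mod {F : Type*} [Monoid F] {n : ℕ} {ζ : F} (hζ : ζ ^ n = 1)
    {x y : ℕ} (h : x ≡ y [MOD n]) : ζ ^ x = ζ ^ y := by
  rw [pow_eq_pow_mod x hζ, pow_eq_pow_mod y hζ, h]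

private lemma neg_one_pow_half_mul {F : Type*} [Field F] {a b : ℕ} (ha : Odd a) (hb : Odd b) :
    ((-1 : F)) ^ ((a * b - 1) / 2) = (-1) ^ ((a - 1) / 2) * (-1) ^ ((b - 1) / 2) := by
  obtain ⟨s, rfl⟩ := ha
  obtain ⟨t, rfl⟩ := hb
  have h1 : (2*s+1) * (2*t+1) = 2*(2*(s*t)+s+t)+1 := by ring
  have h2 : ((2*s+1) * (2*t+1) - 1)/2 = 2*(s*t)+s+t := by rw [h1]; omega
  have h3 : (2*s+1-1)/2 = s := by omega
  have h4 : (2*t+1-1)/2 = t := by omega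
  rw [h2, h3, h4, pow_add, pow_add, pow_mul, neg_one_sq, one_pow, one_mul]

/-- CRT splitting of the quadratic exponential sum. -/
private lemma qsum_mul {F : Type*} [Field F] {a b : ℕ} (ha : 0 < a) (hb : 0 < b)
    (hab : Nat.Coprime a b) {ζ : F} (hζ : ζ ^ (a * b) = 1) :
    (∑ k ∈ range (a*b), ζ ^ (k^2)) =
      (∑ i ∈ range a, (ζ ^ (b^2)) ^ (i^2)) * (∑ j ∈ range b, (ζ ^ (a^2)) ^ (j^2)) := by
  haveI : NeZero a := ⟨ha.ne'⟩
  haveI : NeZero b := ⟨hb.ne'⟩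
  rw [Finset.sum_mul_sum, ← Finset.sum_product']
  have hab0 : 0 < a * b := Nat.mul_pos ha hb
  have hcard : (range (a*b)).card ≤ (range a ×ˢ range b).card := by
    simp [Finset.card_product]
  -- the bijection (i,j) ↦ (b*i + a*j) % (a*b)
  have hmem : ∀ p ∈ range a ×ˢ range b, (b * p.1 + a * p.2) % (a*b) ∈ range (a*b) := by
    intro p _; exact mem_range.mpr (Nat.mod_lt _ hab0)
  have hinj : ∀ p ∈ range a ×ˢ range b, ∀ p' ∈ range a ×ˢ range b,
      (b * p.1 + a * p.2) % (a*b) = (b * p'.1 + a * p'.2) % (a*b) → p = p' := by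
    intro p hp p' hp' h
    simp only [mem_product, mem_range] at hp hp'
    have hmod : (b * p.1 + a * p.2) ≡ (b * p'.1 + a * p'.2) [MOD a*b] := h
    have h1 : p.1 = p'.1 := by
      have hc := (ZMod.natCast_eq_natCast_iff _ _ _).mpr (hmod.of_dvd (dvd_mul_right a b))
      push_cast at hc
      simp only [ZMod.natCast_self, zero_mul, mul_zero, zero_add, add_zero] at hc
      have hbu : IsUnit (b : ZMod a) :=
        ZMod.coe_unitOfCoprime b hab.symm ▸ (ZMod.unitOfCoprime b hab.symm).isUnit
      have := congrArg ZMod.val (hbu.mul_left_cancel hc)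
      rwa [ZMod.val_cast_of_lt hp.1, ZMod.val_cast_of_lt hp'.1] at this
    have h2 : p.2 = p'.2 := by
      have hc := (ZMod.natCast_eq_natCast_iff _ _ _).mpr (hmod.of_dvd (dvd_mul_left b a))
      push_cast at hc
      simp only [ZMod.natCast_self, zero_mul, mul_zero, zero_add, add_zero] at hc
      have hau : IsUnit (a : ZMod b) :=
        ZMod.coe_unitOfCoprime a hab ▸ (ZMod.unitOfCoprime a hab).isUnit
      have := congrArg ZMod.val (hau.mul_left_cancel hc)
      rwa [ZMod.val_cast_of_lt hp.2, ZMod.val_cast_of_lt hp'.2] at this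
    exact Prod.ext h1 h2
  symm
  refine Finset.sum_bij (fun p _ => (b * p.1 + a * p.2) % (a*b)) hmem
    (fun p hp p' hp' h => hinj p hp p' hp' h)
    (fun k hk => by
      obtain ⟨p, hp, hpk⟩ := Finset.surj_on_of_inj_on_of_card_le
        (fun p _ => (b * p.1 + a * p.2) % (a*b)) hmem
        (fun p p' hp hp' h => hinj p hp p' hp' h) hcard k hk
      exact ⟨p, hp, hpk.symm⟩)
    ?_
  intro p hp
  rw [← pow_mul, ← pow_mul, ← pow_add]
  refine pow_congr_mod hζ ?_
  have hring : (b * p.1 + a * p.2)^2 = b^2 * p.1^2 + a^2 * p.2^2 + (a*b) * (2*(p.1*p.2)) := by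
    ring
  have h1 : (b^2 * p.1^2 + a^2 * p.2^2) ≡ (b * p.1 + a * p.2)^2 [MOD a*b] := by
    rw [hring]
    exact (Nat.add_mul_mod_self_left _ _ _).symm
  exact h1.trans ((Nat.mod_modEq _ _).pow 2).symm
private lemma qsum_primepow {F : Type*} [Field F] {q e : ℕ} (hq : q.Prime) (hqo : Odd q)
    (he : 2 ≤ e) {ζ : F} (hord : orderOf ζ = q ^ e) :
    (∑ k ∈ range (q^e), ζ ^ (k^2)) = (q : F) * ∑ w ∈ range (q^(e-2)), (ζ^(q^2)) ^ (w^2) := by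
  have hq1 : 1 < q := hq.one_lt
  have hζ : ζ ^ (q^e) = 1 := by rw [← hord]; exact pow_orderOf_eq_one ζ
  set A := q^(e-1) with hA
  have hApos : 0 < A := Nat.pow_pos hq.pos
  have hAq : q^e = A * q := by rw [hA, ← pow_succ]; congr 1; omega
  -- Step 1: reindex over pairs
  have step1 : (∑ k ∈ range (q^e), ζ ^ (k^2)) =
      ∑ p ∈ range A ×ˢ range q, ζ ^ ((p.1 + A * p.2)^2) := by
    symm
    have hmem : ∀ p ∈ range A ×ˢ range q, p.1 + A * p.2 ∈ range (q^e) := by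
      intro p hp
      simp only [mem_product, mem_range] at hp
      rw [mem_range, hAq]
      calc p.1 + A * p.2 < A + A * p.2 := by omega
        _ = A * (p.2 + 1) := by ring
        _ ≤ A * q := Nat.mul_le_mul_left _ (by omega)
    have hinj : ∀ p ∈ range A ×ˢ range q, ∀ p' ∈ range A ×ˢ range q,
        p.1 + A * p.2 = p'.1 + A * p'.2 → p = p' := by
      intro p hp p' hp' h
      simp only [mem_product, mem_range] at hp hp'
      have h1 : p.1 = p'.1 := by
        have := congrArg (· % A) h
        simpa [Nat.add_mul_mod_self_left, Nat.mod_eq_of_lt hp.1, Nat.mod_eq_of_lt hp'.1]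
          using this
      have h2 : p.2 = p'.2 := by
        have : A * p.2 = A * p'.2 := by omega
        exact Nat.eq_of_mul_eq_mul_left hApos this
      exact Prod.ext h1 h2
    have hcard : (range (q^e)).card ≤ (range A ×ˢ range q).card := by
      simp [Finset.card_product, hAq]
    refine Finset.sum_bij (fun p _ => p.1 + A * p.2) hmem hinj
      (fun k hk => by
        obtain ⟨p, hp, hpk⟩ := Finset.surj_on_of_inj_on_of_card_le
          (fun p _ => p.1 + A * p.2) hmem (fun p p' hp hp' h => hinj p hp p' hp' h) hcard k hk
        exact ⟨p, hp, hpk.symm⟩)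
      (fun p hp => rfl)
  -- Step 2: each term factors; inner geometric sum
  have hA2 : ζ ^ (A^2) = 1 := by
    apply orderOf_dvd_iff_pow_eq_one.mp
    rw [hord, hA, ← pow_mul]
    exact pow_dvd_pow q (by omega)
  have hterm : ∀ p : ℕ × ℕ, ζ ^ ((p.1 + A * p.2)^2) = ζ ^ (p.1^2) * (ζ ^ (2*p.1*A)) ^ p.2 := by
    intro p
    have hexp : (p.1 + A * p.2)^2 = p.1^2 + (2*p.1*A)*p.2 + A^2 * p.2^2 := by ring
    rw [hexp, pow_add, pow_add, pow_mul (ζ) (A^2), hA2, one_pow, mul_one, pow_mul]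
  have hgeo : ∀ u : ℕ, (∑ v ∈ range q, (ζ ^ (2*u*A)) ^ v) = if q ∣ u then (q:F) else 0 := by
    intro u
    by_cases hdvd : q ∣ u
    · obtain ⟨w, rfl⟩ := hdvd
      have : ζ ^ (2*(q*w)*A) = 1 := by
        apply orderOf_dvd_iff_pow_eq_one.mp
        rw [hord]
        exact Dvd.intro (2*w) (by rw [hAq]; ring)
      simp [this, dvd_mul_right]
    · have hne : ζ ^ (2*u*A) ≠ 1 := by
        intro hone
        have hdvd' : A * q ∣ A * (2*u) := by
          rw [← hAq, show A * (2*u) = 2*u*A by ring, ← hord]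
          exact orderOf_dvd_of_pow_eq_one hone
        have : q ∣ 2*u := (Nat.mul_dvd_mul_iff_left hApos).mp hdvd'
        rcases (Nat.Prime.dvd_mul hq).mp this with h2 | hu
        · have hq2 : q = 2 := (Nat.prime_dvd_prime_iff_eq hq Nat.prime_two).mp h2
          rw [Nat.odd_iff] at hqo
          omega
        · exact hdvd hu
      rw [if_neg hdvd, geom_sum_eq hne]
      have : (ζ ^ (2*u*A)) ^ q = 1 := by
        rw [← pow_mul]
        apply orderOf_dvd_iff_pow_eq_one.mp
        rw [hord]
        exact Dvd.intro (2*u) (by rw [hAq]; ring)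
      rw [this, sub_self, zero_div]
  rw [step1, Finset.sum_product]
  have step3 : ∀ u ∈ range A, (∑ v ∈ range q, ζ ^ ((u + A * v)^2))
      = ζ ^ (u^2) * (if q ∣ u then (q:F) else 0) := by
    intro u _
    rw [← hgeo u, Finset.mul_sum]
    exact Finset.sum_congr rfl fun v _ => hterm (u, v)
  rw [Finset.sum_congr rfl step3]
  -- Step 4: collect multiples of q
  have hA' : A = q * q^(e-2) := by rw [hA, ← pow_succ']; congr 1; omega
  calc ∑ u ∈ range A, ζ ^ (u^2) * (if q ∣ u then (q:F) else 0)
      = ∑ u ∈ range A, (if q ∣ u then ζ ^ (u^2) * (q:F) else 0) := by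
        refine Finset.sum_congr rfl fun u _ => ?_
        split_ifs <;> simp
    _ = ∑ u ∈ (range A).filter (fun u => q ∣ u), ζ ^ (u^2) * (q:F) :=
        (Finset.sum_filter _ _).symm
    _ = ∑ w ∈ range (q^(e-2)), (ζ^(q^2)) ^ (w^2) * (q:F) := by
        symm
        refine Finset.sum_nbij' (fun w => q * w) (fun u => u / q) ?_ ?_ ?_ ?_ ?_
        · intro w hw
          simp only [mem_filter, mem_range] at *
          exact ⟨by rw [hA']; exact (Nat.mul_lt_mul_left hq.pos).mpr hw, dvd_mul_right q w⟩
        · intro u hu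
          simp only [mem_filter, mem_range] at hu ⊢
          rw [Nat.div_lt_iff_lt_mul hq.pos, mul_comm]
          rw [hA'] at hu
          exact hu.1
        · intro w _; exact Nat.mul_div_cancel_left w hq.pos
        · intro u hu
          simp only [mem_filter] at hu
          exact Nat.mul_div_cancel' hu.2
        · intro w _
          rw [← pow_mul]
          congr 1
          ring
    _ = (q : F) * ∑ w ∈ range (q^(e-2)), (ζ^(q^2)) ^ (w^2) := by
        rw [Finset.mul_sum]
        exact Finset.sum_congr rfl fun w _ => mul_comm _ _

private lemma qsum_prime {F : Type*} [Field F] (hF2 : ringChar F ≠ 2) {q : ℕ} (hq : q.Prime)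
    (hq2 : q ≠ 2) {ζ : F} (hord : orderOf ζ = q) :
    (∑ k ∈ range q, ζ ^ (k^2))^2 = (-1 : F)^((q-1)/2) * q := by
  haveI : Fact q.Prime := ⟨hq⟩
  haveI : NeZero q := ⟨hq.ne_zero⟩
  classical
  have hζq : ζ ^ q = 1 := by rw [← hord]; exact pow_orderOf_eq_one ζ
  have hζ1 : ζ ≠ 1 := by
    intro h
    rw [h, orderOf_one] at hord
    exact hq.one_lt.ne hord
  have hcharq : ringChar (ZMod q) ≠ 2 := by
    rw [ZMod.ringChar_zmod_n]; exact hq2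
  set ψ : AddChar (ZMod q) F := AddChar.zmodChar q hζq with hψdef
  have hroot : IsPrimitiveRoot ζ q := by
    rw [← hord]; exact IsPrimitiveRoot.orderOf ζ
  have hprim : ψ.IsPrimitive := AddChar.zmodChar_primitive_of_primitive_root q hroot
  set χ : MulChar (ZMod q) F :=
    (quadraticChar (ZMod q)).ringHomComp (Int.castRingHom F) with hχdef
  have hχ1 : χ ≠ 1 := by
    obtain ⟨a, ha⟩ := quadraticChar_exists_neg_one hcharq
    intro h
    have ha0 : a ≠ 0 := by
      intro h0; rw [h0, MulChar.map_zero] at ha; norm_num at ha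
    have : χ a = 1 := by
      rw [h, ← (Ne.isUnit ha0).unit_spec]
      exact MulChar.one_apply_coe _
    rw [hχdef, MulChar.ringHomComp_apply, ha, map_neg, map_one] at this
    exact Ring.neg_one_ne_one_of_char_ne_two hF2 this
  have hχq : χ.IsQuadratic := (quadraticChar_isQuadratic (ZMod q)).comp _
  -- the sum equals the Gauss sum
  have hsum1 : (∑ k ∈ range q, ζ ^ (k^2)) = ∑ x : ZMod q, ψ (x^2) := by
    refine Finset.sum_nbij' (fun k => (k : ZMod q)) (fun x => x.val) ?_ ?_ ?_ ?_ ?_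
    · intro k _; exact mem_univ _
    · intro x _; exact mem_range.mpr (ZMod.val_lt x)
    · intro k hk; exact ZMod.val_cast_of_lt (mem_range.mp hk)
    · intro x _; exact ZMod.natCast_zmod_val x
    · intro k _
      rw [hψdef, show ((k : ZMod q)^2) = ((k^2 : ℕ) : ZMod q) by push_cast; ring,
        AddChar.zmodChar_apply']
  have hψsum : ∑ x : ZMod q, ψ x = 0 := by
    have hψ0 : ψ ≠ 0 := by
      rw [AddChar.ne_zero_iff]
      refine ⟨1, ?_⟩
      haveI : Fact (1 < q) := ⟨hq.one_lt⟩
      rw [hψdef, AddChar.zmodChar_apply, ZMod.val_one, pow_one]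
      exact hζ1
    rw [AddChar.sum_eq_ite]
    simp [hψ0]
  have hsum2 : (∑ x : ZMod q, ψ (x^2)) = gaussSum χ ψ := by
    have hfiber : ∀ t : ZMod q,
        (∑ x ∈ univ.filter (fun x : ZMod q => x^2 = t), ψ (x^2)) = (χ t + 1) * ψ t := by
      intro t
      have hcard : ((univ.filter (fun x : ZMod q => x^2 = t)).card : F) = χ t + 1 := by
        have h := quadraticChar_card_sqrts hcharq t
        have hset : {x : ZMod q | x^2 = t}.toFinset = univ.filter (fun x : ZMod q => x^2 = t) := by
          ext x; simp [Set.mem_toFinset]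
        rw [hset] at h
        have := congrArg (fun z : ℤ => (z : F)) h
        push_cast at this
        rw [this, hχdef, MulChar.ringHomComp_apply, eq_intCast]
      calc (∑ x ∈ univ.filter (fun x : ZMod q => x^2 = t), ψ (x^2))
          = ∑ x ∈ univ.filter (fun x : ZMod q => x^2 = t), ψ t := by
            refine Finset.sum_congr rfl fun x hx => ?_
            rw [(mem_filter.mp hx).2]
        _ = ((univ.filter (fun x : ZMod q => x^2 = t)).card : F) * ψ t := by
            rw [Finset.sum_const, nsmul_eq_mul]
        _ = (χ t + 1) * ψ t := by rw [hcard]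
    calc (∑ x : ZMod q, ψ (x^2))
        = ∑ t : ZMod q, ∑ x ∈ univ.filter (fun x : ZMod q => x^2 = t), ψ (x^2) :=
          (Finset.sum_fiberwise_of_maps_to (fun x _ => mem_univ _) _).symm
      _ = ∑ t : ZMod q, (χ t + 1) * ψ t := Finset.sum_congr rfl fun t _ => hfiber t
      _ = gaussSum χ ψ := by
          simp only [add_mul, one_mul, Finset.sum_add_distrib, hψsum, add_zero]
          rfl
  rw [hsum1, hsum2, gaussSum_sq hχ1 hχq hprim]
  congr 1
  · -- χ (-1) = (-1)^((q-1)/2)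
    rw [hχdef, MulChar.ringHomComp_apply, quadraticChar_neg_one hcharq]
    have hcard : Fintype.card (ZMod q) = q := ZMod.card q
    rw [hcard, ZMod.χ₄_nat_eq_if_mod_four]
    have hq4 : q % 4 = 1 ∨ q % 4 = 3 := by
      have := hq.odd_of_ne_two hq2
      rw [Nat.odd_iff] at this
      omega
    rcases hq4 with h | h
    · rw [if_neg (by omega : ¬ q % 2 = 0), if_pos h]
      have : Even ((q-1)/2) := by rw [Nat.even_iff]; omega
      rw [this.neg_one_pow]
      norm_num
    · rw [if_neg (by omega : ¬ q % 2 = 0), if_neg (by omega : ¬ q % 4 = 1)]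
      have : Odd ((q-1)/2) := by rw [Nat.odd_iff]; omega
      rw [this.neg_one_pow]
      norm_num
  · rw [ZMod.card q]

private lemma qsum_sq {F : Type*} [Field F] (hF2 : ringChar F ≠ 2) :
    ∀ n : ℕ, Odd n → ∀ ζ : F, orderOf ζ = n → (n : F) ≠ 0 →
      (∑ k ∈ range n, ζ ^ (k^2))^2 = (-1 : F)^((n-1)/2) * n := by
  intro n
  induction n using Nat.strong_induction_on with
  | _ n ih =>
  intro hodd ζ hord hn0
  have hn_pos : 0 < n := hodd.pos
  have hodd_dvd : ∀ d : ℕ, d ∣ n → Odd d := by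
    intro d hd
    rcases hd with ⟨c, rfl⟩
    rcases Nat.even_or_odd d with he | ho
    · exact absurd (he.mul_right c) ((Nat.not_even_iff_odd.mpr hodd))
    · exact ho
  have hcast_dvd : ∀ d : ℕ, d ∣ n → (d : F) ≠ 0 := by
    intro d hd hd0
    rcases hd with ⟨c, rfl⟩
    apply hn0
    push_cast
    rw [hd0, zero_mul]
  rcases eq_or_ne n 1 with rfl | hn1
  · simp
  by_cases hnp : n.Prime
  · refine qsum_prime hF2 hnp ?_ hord
    rintro rfl
    rw [Nat.odd_iff] at hodd
    omega
  have hq : n.minFac.Prime := Nat.minFac_prime hn1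
  have hq_dvd : n.minFac ∣ n := Nat.minFac_dvd n
  have hqodd : Odd n.minFac := hodd_dvd _ hq_dvd
  have hζn : ζ ^ n = 1 := by rw [← hord]; exact pow_orderOf_eq_one ζ
  obtain ⟨q, e, m, hqq, hee, hmm⟩ :
      ∃ q e m : ℕ, q = n.minFac ∧ e = n.factorization n.minFac ∧ m = n / n.minFac ^ e :=
    ⟨_, _, _, rfl, rfl, rfl⟩
  rw [← hqq] at hq hq_dvd hqodd
  have hqe_dvd : q ^ e ∣ n := by rw [hqq, hee]; exact Nat.ordProj_dvd n _
  have hnm : q ^ e * m = n := by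
    rw [hmm, hqq, hee]; exact Nat.ordProj_mul_ordCompl_eq_self n _
  have he1 : 1 ≤ e := by
    rw [hee]
    exact Nat.Prime.factorization_pos_of_dvd (Nat.minFac_prime hn1) hn_pos.ne' (Nat.minFac_dvd n)
  have hco : Nat.Coprime (q^e) m := by
    rw [hmm, hee, hqq]
    exact Nat.Coprime.pow_left _ (Nat.coprime_ordCompl (Nat.minFac_prime hn1) hn_pos.ne')
  have hm_pos : 0 < m := by
    rcases Nat.eq_zero_or_pos m with h | h
    · rw [h, mul_zero] at hnm; omega
    · exact h
  rcases eq_or_ne m 1 with hm1 | hm1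
  · -- prime power case
    have hn' : n = q ^ e := by rw [← hnm, hm1, mul_one]
    have he2 : 2 ≤ e := by
      by_contra h
      have he' : e = 1 := by omega
      rw [he', pow_one] at hn'
      exact hnp (hn' ▸ hq)
    have hsplit : n = q^2 * q^(e-2) := by rw [hn', ← pow_add]; congr 1; omega
    have hM_dvd : q^(e-2) ∣ n := by rw [hsplit]; exact dvd_mul_left _ _
    have hq2_dvd : q^2 ∣ n := by rw [hsplit]; exact dvd_mul_right _ _
    have hMlt : q^(e-2) < n := by
      rw [hn']
      exact Nat.pow_lt_pow_right hq.one_lt (by omega)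
    have hord2 : orderOf (ζ ^ (q^2)) = q^(e-2) := by
      rw [orderOf_pow' ζ ((pow_pos hq.pos 2).ne'), hord, hn']
      rw [Nat.gcd_eq_right (pow_dvd_pow q (by omega))]
      exact Nat.pow_div he2 hq.pos
    have hsub := ih _ hMlt (hodd_dvd _ hM_dvd) (ζ ^ (q^2)) hord2 (hcast_dvd _ hM_dvd)
    rw [hn', qsum_primepow hq hqodd he2 (hn' ▸ hord), mul_pow, hsub]
    have hpar : ((-1 : F))^((q^e - 1)/2) = (-1)^((q^(e-2) - 1)/2) := by
      rw [show q^e = q^2 * q^(e-2) by rw [← hn']; exact hsplit]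
      rw [neg_one_pow_half_mul (hodd_dvd _ hq2_dvd) (hodd_dvd _ hM_dvd)]
      have heven : Even ((q^2 - 1)/2) := by
        obtain ⟨s, rfl⟩ := hqodd
        have h : (2*s+1)^2 = 2*(2*(s*s)+2*s)+1 := by ring
        rw [h, show (2*(2*(s*s)+2*s)+1-1)/2 = 2*(s*s)+2*s by omega]
        exact ⟨s*s+s, by ring⟩
      rw [heven.neg_one_pow, one_mul]
    rw [hpar]
    push_cast
    rw [show (q:F)^e = (q:F)^(2+(e-2)) by congr 1; omega, pow_add]
    ring
  · -- coprime split case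
    have ha1 : 1 < q^e := by
      calc 1 < q := hq.one_lt
        _ = q^1 := (pow_one q).symm
        _ ≤ q^e := Nat.pow_le_pow_right hq.pos he1
    have hm1' : 1 < m := by omega
    have halt : q^e < n := by
      rw [← hnm]
      exact (Nat.lt_mul_iff_one_lt_right (by omega)).mpr hm1'
    have hmlt : m < n := by
      rw [← hnm]
      exact (Nat.lt_mul_iff_one_lt_left hm_pos).mpr ha1
    have hm_dvd : m ∣ n := ⟨q^e, by rw [← hnm]; ring⟩
    have horda : orderOf (ζ ^ (m^2)) = q^e := by
      rw [orderOf_pow' ζ ((pow_pos hm_pos 2).ne'), hord, ← hnm, sq]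
      rw [show Nat.gcd (q^e * m) (m * m) = Nat.gcd (q^e) m * m from by
        rw [← Nat.gcd_mul_right]]
      rw [hco, one_mul]
      exact Nat.mul_div_cancel _ hm_pos
    have hordm : orderOf (ζ ^ ((q^e)^2)) = m := by
      rw [orderOf_pow' ζ ((pow_pos (Nat.pow_pos (n := e) hq.pos) 2).ne'), hord, ← hnm, sq]
      rw [Nat.gcd_mul_left, Nat.Coprime.gcd_eq_one hco.symm, mul_one]
      exact Nat.mul_div_cancel_left _ (by omega)
    have hsa := ih _ halt (hodd_dvd _ hqe_dvd) (ζ ^ (m^2)) horda (hcast_dvd _ hqe_dvd)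
    have hsm := ih _ hmlt (hodd_dvd _ hm_dvd) (ζ ^ ((q^e)^2)) hordm (hcast_dvd _ hm_dvd)
    rw [← hnm, qsum_mul (by omega) hm_pos hco (hnm ▸ hζn), mul_pow, hsa, hsm,
      neg_one_pow_half_mul (hodd_dvd _ hqe_dvd) (hodd_dvd _ hm_dvd)]
    push_cast
    ring




/-- The quadratic Gauss-type sum `Q(g,p) = ∑_{k=1}^{n} g^{k²} (mod p)`, where `n` is the
multiplicative order of `g` modulo `p`. -/
def quadGaussSum (p : ℕ) (g : ℤ) (n : ℕ) : ZMod p :=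
  ∑ k ∈ Finset.Icc 1 n, (g : ZMod p) ^ (k ^ 2)

/-- If `n`, the multiplicative order of `g` mod `p`, satisfies `n ≡ 3 (mod 4)`,
then `Q(g,p)² ≡ -n (mod p)`. -/
theorem quadGaussSum_sq_of_order_three_mod_four (p : ℕ) (hp : p.Prime)
    (g : ℤ) (hg : Int.gcd g p = 1)
    (n : ℕ) (hn : n = orderOf ((g : ZMod p))) (hn4 : n % 4 = 3) :
    (quadGaussSum p g n) ^ 2 = -(n : ZMod p) := by
  haveI : Fact p.Prime := ⟨hp⟩
  set ζ : ZMod p := (g : ZMod p) with hζdef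
  have hζ0 : ζ ≠ 0 := by
    intro h
    rw [hζdef, ZMod.intCast_zmod_eq_zero_iff_dvd] at h
    have h2 : p ∣ Int.gcd g p :=
      Nat.dvd_gcd (Int.natCast_dvd.mp h) (by simp)
    rw [hg] at h2
    have := Nat.le_of_dvd one_pos h2
    have := hp.two_le
    omega
  have hζp : ζ ^ (p - 1) = 1 := ZMod.pow_card_sub_one_eq_one hζ0
  have hdvd : n ∣ p - 1 := by rw [hn]; exact orderOf_dvd_of_pow_eq_one hζp
  have hn3 : 3 ≤ n := by
    rcases Nat.lt_or_ge n 3 with h | h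
    · interval_cases n <;> omega
    · exact h
  have hp2 : p ≠ 2 := by
    intro h
    rw [h] at hdvd
    have := Nat.le_of_dvd one_pos hdvd
    omega
  have hchar : ringChar (ZMod p) ≠ 2 := by rw [ZMod.ringChar_zmod_n]; exact hp2
  have hn0 : (n : ZMod p) ≠ 0 := by
    intro h
    have hpn : p ∣ n := (ZMod.natCast_eq_zero_iff _ _).mp h
    have h1 : p ≤ n := Nat.le_of_dvd (by omega) hpn
    have h2 : n ≤ p - 1 := Nat.le_of_dvd (by have := hp.two_le; omega : 0 < p - 1) hdvd
    have := hp.two_le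
    omega
  have hodd : Odd n := by rw [Nat.odd_iff]; omega
  have hkey := qsum_sq hchar n hodd ζ hn.symm hn0
  have hζn : ζ ^ n = 1 := by rw [hn]; exact pow_orderOf_eq_one ζ
  have hIcc : (∑ k ∈ Icc 1 n, ζ ^ (k^2)) = ∑ k ∈ range n, ζ ^ (k^2) := by
    have h1 : (∑ k ∈ Icc 1 n, ζ ^ (k^2)) = ∑ k ∈ Ico 1 (n+1), ζ ^ (k^2) := by
      rw [Finset.Ico_add_one_right_eq_Icc]
    have h2 : (∑ k ∈ Ico 1 (n+1), ζ ^ (k^2)) = (∑ k ∈ Ico 1 n, ζ ^ (k^2)) + ζ ^ (n^2) :=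
      Finset.sum_Ico_succ_top (by omega) _
    have h3 : (∑ k ∈ range n, ζ ^ (k^2)) = ζ ^ (0^2) + ∑ k ∈ Ico 1 n, ζ ^ (k^2) := by
      rw [Finset.range_eq_Ico]
      exact Finset.sum_eq_sum_Ico_succ_bot (by omega) _
    have h4 : ζ ^ (n^2) = 1 := by rw [pow_two, pow_mul, hζn, one_pow]
    rw [h1, h2, h3, h4]
    norm_num [add_comm]
  have hsq : (quadGaussSum p g n) = ∑ k ∈ range n, ζ ^ (k^2) := by
    rw [quadGaussSum, ← hζdef]
    exact hIcc
  rw [hsq, hkey]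
  have : Odd ((n-1)/2) := by rw [Nat.odd_iff]; omega
  rw [this.neg_one_pow]
  ring
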